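/- If N is a nonnegative integer satisfying ⌊3N/4⌋ < h(d), then h(d+1) > N, where h(d) is the minimal size of a blocking set in dimension d. -/
import Mathlib


/-- Two cube centers in `{0,1,2,3}^d` (modeled as `(ZMod 4)^d`) overlap iff
no coordinate differs by exactly 2 modulo 4. -/
def Overlap {d : ℕ} (x y : Fin d → ZMod 4) : Prop := ∀ i, x i - y i ≠ 2

/-- A cube packing: pairwise non-overlapping centers. -/
def IsPacking {d : ℕ} (P : Finset (Fin d → ZMod 4)) : Prop :=
  ∀ x ∈ P, ∀ y ∈ P, x ≠ y → ¬ Overlap x y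

/-- Non-extendible cube packing: no vector outside can be added. -/
def IsNonExtendible {d : ℕ} (P : Finset (Fin d → ZMod 4)) : Prop :=
  IsPacking P ∧ ∀ v : Fin d → ZMod 4, v ∉ P → ∃ x ∈ P, Overlap v x

/-- Blocking set: every vector overlaps some element of `S`. -/
def IsBlocking {d : ℕ} (S : Finset (Fin d → ZMod 4)) : Prop :=
  ∀ v : Fin d → ZMod 4, ∃ s ∈ S, Overlap v s

/-- `f d`: minimal number of cubes in a non-extendible cube packing. -/
noncomputable def f (d : ℕ) : ℕ :=
  sInf {n | ∃ P : Finset (Fin d → ZMod 4), IsNonExtendible P ∧ P.card = n}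

/-- `h d`: minimal size of a blocking set. -/
noncomputable def hBlock (d : ℕ) : ℕ :=
  sInf {n | ∃ S : Finset (Fin d → ZMod 4), IsBlocking S ∧ S.card = n}

lemma per_fiber {d : ℕ} (S : Finset (Fin (d+1) → ZMod 4)) (hS : IsBlocking S) (j : ZMod 4) :
    hBlock d + (S.filter (fun s => s (Fin.last d) = j)).card ≤ S.card := by
  classical
  have hT : IsBlocking ((S.filter (fun s => ¬ s (Fin.last d) = j)).image
      (fun s (i : Fin d) => s i.castSucc)) := by
    intro w
    obtain ⟨s, hsS, hov⟩ := hS (Fin.snoc w (j + 2))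
    refine ⟨fun i => s i.castSucc,
      Finset.mem_image.2 ⟨s, Finset.mem_filter.2 ⟨hsS, ?_⟩, rfl⟩, ?_⟩
    · intro h
      exact hov (Fin.last d) (by rw [Fin.snoc_last, h]; ring)
    · intro i
      have := hov i.castSucc
      rwa [Fin.snoc_castSucc] at this
  have h1 : hBlock d ≤ ((S.filter (fun s => ¬ s (Fin.last d) = j)).image
      (fun s (i : Fin d) => s i.castSucc)).card := Nat.sInf_le ⟨_, hT, rfl⟩
  have h2 := Finset.card_image_le (s := S.filter (fun s => ¬ s (Fin.last d) = j))
      (f := fun s (i : Fin d) => s i.castSucc)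
  have h3 := Finset.card_filter_add_card_filter_not
      (s := S) (p := fun s => s (Fin.last d) = j)
  linarith

lemma blocking_bound {d : ℕ} (S : Finset (Fin (d+1) → ZMod 4)) (hS : IsBlocking S) :
    4 * hBlock d + S.card ≤ 4 * S.card := by
  classical
  have hsum : S.card = ∑ j : ZMod 4, (S.filter fun s => s (Fin.last d) = j).card :=
    Finset.card_eq_sum_card_fiberwise (fun x _ => Finset.mem_univ _)
  have hle : ∑ j : ZMod 4, (hBlock d + (S.filter fun s => s (Fin.last d) = j).card)
      ≤ ∑ _j : ZMod 4, S.card :=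
    Finset.sum_le_sum (fun j _ => per_fiber S hS j)
  rw [Finset.sum_add_distrib, Finset.sum_const, Finset.sum_const] at hle
  simp only [Finset.card_univ] at hle
  have h4 : Fintype.card (ZMod 4) = 4 := rfl
  simp only [smul_eq_mul] at hle
  rw [h4] at hle
  linarith

theorem hBlock_key_lemma (d N : ℕ) (hN : 3 * N / 4 < hBlock d) :
    N < hBlock (d + 1) := by
  classical
  have hne : ({n | ∃ S : Finset (Fin (d+1) → ZMod 4), IsBlocking S ∧ S.card = n}).Nonempty :=
    ⟨(Finset.univ : Finset (Fin (d+1) → ZMod 4)).card, Finset.univ,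
      fun v => ⟨v, Finset.mem_univ v, fun i => by rw [sub_self]; decide⟩, rfl⟩
  have hmem := Nat.sInf_mem hne
  obtain ⟨S, hS, hcard⟩ := hmem
  have hb := blocking_bound S hS
  rw [hcard] at hb
  show N < sInf _
  omega
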